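/- Let N and I be natural numbers with N > 1 and I ≥ 1, and let M be a positive real number satisfying 4·I·M² ≤ N. Let x, η, y : Fin I → ℤ satisfy |x i| < M, 0 ≤ η i and (η i : ℝ) < M, and |y i| < M for all i (bounds on the real coercions). Let S' = ∑ i, (x i + η i) · (y i) in ℤ. Then the minimal-absolute-value representative of (S' : ZMod N) equals S', and consequently ZMod.valMinAbs ((S' : ZMod N)) − ∑ i, (η i) · (y i) = ∑ i, (x i) · (y i). -/
import Mathlib

open Finset

/-- End-to-end DEFE plaintext recovery: under the magnitude bounds, the
minimal-absolute-value representative mod `N` of the noise-augmented inner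
product `S' = ∑ i, (x i + η i)·(y i)` equals `S'` itself, and subtracting the
noise contribution `∑ i, η i · y i` recovers the true inner product
`∑ i, x i · y i`. -/
theorem defe_usrdec_correct (N I : ℕ) (hN : 1 < N) (hI : 1 ≤ I) (M : ℝ)
    (hM : 0 < M) (hMN : 4 * (I : ℝ) * M ^ 2 ≤ (N : ℝ))
    (x η y : Fin I → ℤ)
    (hx : ∀ i, |(x i : ℝ)| < M)
    (hη0 : ∀ i, 0 ≤ η i) (hη : ∀ i, (η i : ℝ) < M)
    (hy : ∀ i, |(y i : ℝ)| < M) :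
    ZMod.valMinAbs (((∑ i, (x i + η i) * y i : ℤ) : ZMod N))
        = ∑ i, (x i + η i) * y i ∧
    ZMod.valMinAbs (((∑ i, (x i + η i) * y i : ℤ) : ZMod N))
        - ∑ i, η i * y i = ∑ i, x i * y i := by
  have : NeZero N := ⟨by omega⟩
  set S : ℤ := ∑ i, (x i + η i) * y i with hS
  have hterm : ∀ i : Fin I, |((x i + η i) * y i : ℝ)| < 2 * M ^ 2 := by
    intro i
    have h1 : |((x i : ℝ) + η i)| < 2 * M := by
      have := hx i; have := hη i
      have hη0' : (0:ℝ) ≤ η i := by exact_mod_cast hη0 i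
      have h := abs_lt.mp (hx i)
      rw [abs_lt]; constructor <;> nlinarith [h.1, h.2]
    have := hy i
    calc |((x i : ℝ) + η i) * y i| = |((x i : ℝ) + η i)| * |(y i : ℝ)| := abs_mul _ _
      _ < 2 * M * M := by
          apply mul_lt_mul' h1.le (hy i) (abs_nonneg _)
          positivity
      _ = 2 * M ^ 2 := by ring
  have hSb : |(S : ℝ)| < (N : ℝ) / 2 := by
    have h1 : |(S : ℝ)| ≤ ∑ i, |((x i + η i) * y i : ℝ)| := by
      rw [hS]; push_cast
      exact Finset.abs_sum_le_sum_abs _ _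
    have h2 : ∑ i : Fin I, |((x i + η i) * y i : ℝ)| < ∑ _i : Fin I, 2 * M ^ 2 := by
      apply Finset.sum_lt_sum_of_nonempty
      · exact Finset.univ_nonempty_iff.mpr ⟨⟨0, by omega⟩⟩
      · intro i _; exact hterm i
    have h3 : (∑ _i : Fin I, 2 * M ^ 2 : ℝ) = I * (2 * M ^ 2) := by
      simp [Finset.sum_const, mul_comm]
    nlinarith [h1, h2]
  have hfirst : ZMod.valMinAbs ((S : ZMod N)) = S := by
    rw [ZMod.valMinAbs_spec]
    refine ⟨rfl, ?_, ?_⟩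
    · have : -((N : ℝ)) < (S : ℝ) * 2 := by
        rw [abs_lt] at hSb; linarith [hSb.1]
      exact_mod_cast this
    · have : (S : ℝ) * 2 ≤ (N : ℝ) := by
        rw [abs_lt] at hSb; linarith [hSb.2]
      exact_mod_cast this
  refine ⟨hfirst, ?_⟩
  rw [hfirst, hS, ← Finset.sum_sub_distrib]
  congr 1; ext i; ring
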